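/- arXiv:0906.3415 — 6 statements merged into one kernel-verified Lean document; each statement's English description precedes it below -/
import Mathlib

section
/- The function Φ_s is a normalized 3-cocycle on the cyclic group ℤ_n with values in the nonzero complex numbers; that is, Φ_s takes nonzero values, Φ_s(y,z,w)·Φ_s(x,yz,w)·Φ_s(x,y,z) = Φ_s(xy,z,w)·Φ_s(x,y,zw) for all x,y,z,w ∈ ℤ_n, and Φ_s(x, g^0, y) = 1 for all x, y ∈ ℤ_n. -/
/-- The 3-cocycle `Φ_s` on the cyclic group `ℤ_n` (written additively via `ZMod n`,
where `g^i` corresponds to `(i : ZMod n)`), defined by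
`Φ_s(g^i, g^j, g^k) = 𝕢^{s i (j+k-(j+k)')/n}` for `0 ≤ i,j,k ≤ n-1`,
where `i'` is the remainder of `i` modulo `n`. -/
noncomputable def PhiCocycle (n s : ℕ) (q : ℂ) (x y z : ZMod n) : ℂ :=
  q ^ (s * x.val * ((y.val + z.val - (y.val + z.val) % n) / n))

lemma phiCocycle_eq (n s : ℕ) (hn : 0 < n) (q : ℂ) (x y z : ZMod n) :
    PhiCocycle n s q x y z = q ^ (s * x.val * ((y.val + z.val) / n)) := by
  unfold PhiCocycle
  congr 2
  have h2 : y.val + z.val - (y.val + z.val) % n = n * ((y.val + z.val) / n) :=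
    Nat.sub_eq_of_eq_add (Nat.div_add_mod (y.val + z.val) n).symm
  rw [h2, Nat.mul_div_cancel_left _ hn]

/-- `Φ_s` is a normalized 3-cocycle on `ℤ_n` with values in `ℂ∖{0}`. -/
theorem phiCocycle_is_normalized_three_cocycle
    (n : ℕ) (hn : 2 ≤ n) (q : ℂ) (hq : IsPrimitiveRoot q n)
    (s : ℕ) (hs : s ≤ n - 1) :
    (∀ x y z : ZMod n, PhiCocycle n s q x y z ≠ 0) ∧
    (∀ x y z w : ZMod n,
      PhiCocycle n s q y z w * PhiCocycle n s q x (y + z) w * PhiCocycle n s q x y z =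
        PhiCocycle n s q (x + y) z w * PhiCocycle n s q x y (z + w)) ∧
    (∀ x y : ZMod n, PhiCocycle n s q x 0 y = 1) := by
  haveI : NeZero n := ⟨by omega⟩
  have hn0 : 0 < n := by omega
  have hq0 : q ≠ 0 := hq.ne_zero (by omega)
  refine ⟨?_, ?_, ?_⟩
  · intro x y z
    unfold PhiCocycle
    exact pow_ne_zero _ hq0
  · intro x y z w
    simp only [phiCocycle_eq n s hn0 q]
    set a := x.val with ha
    set b := y.val with hb
    set c := z.val with hc
    set d := w.val with hd
    rw [ZMod.val_add y z, ZMod.val_add z w, ZMod.val_add x y]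
    rw [← pow_add, ← pow_add, ← pow_add]
    have h1 : ((b + c) % n + d) / n + (b + c) / n = (b + c + d) / n := by
      have h := Nat.mod_add_div (b + c) n
      calc ((b + c) % n + d) / n + (b + c) / n
          = (((b + c) % n + d) + n * ((b + c) / n)) / n :=
            (Nat.add_mul_div_left _ _ hn0).symm
        _ = (b + c + d) / n := by
            rw [show ((b + c) % n + d) + n * ((b + c) / n)
                = ((b + c) % n + n * ((b + c) / n)) + d from by ring, h]
    have h2 : (b + (c + d) % n) / n + (c + d) / n = (b + c + d) / n := by
      have h := Nat.mod_add_div (c + d) n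
      calc (b + (c + d) % n) / n + (c + d) / n
          = ((b + (c + d) % n) + n * ((c + d) / n)) / n :=
            (Nat.add_mul_div_left _ _ hn0).symm
        _ = (b + c + d) / n := by
            rw [show (b + (c + d) % n) + n * ((c + d) / n)
                = b + ((c + d) % n + n * ((c + d) / n)) from by ring, h, ← Nat.add_assoc]
    have h3 : (a + b) % n + n * ((a + b) / n) = a + b := Nat.mod_add_div _ _
    have key : s * ((a + b) % n) * ((c + d) / n) + s * a * ((b + (c + d) % n) / n)
        + n * (s * ((a + b) / n) * ((c + d) / n))
        = s * b * ((c + d) / n) + s * a * (((b + c) % n + d) / n) + s * a * ((b + c) / n) := by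
      zify at h1 h2 h3 ⊢
      linear_combination ((s : ℤ) * (((c : ℤ) + (d : ℤ)) / (n : ℤ))) * h3 + ((s : ℤ) * a) * h2
        - ((s : ℤ) * a) * h1
    rw [← key, pow_add, pow_mul, hq.pow_eq_one, one_pow, mul_one]
  · intro x y
    rw [phiCocycle_eq n s hn0 q]
    rw [ZMod.val_zero, Nat.zero_add, Nat.div_eq_of_lt (ZMod.val_lt y), Nat.mul_zero, pow_zero]
end

section
/- For integers s, t with 0 ≤ s, t ≤ n-1, the 3-cocycles Φ_s and Φ_t on ℤ_n are cohomologous (i.e., the pointwise quotient Φ_s/Φ_t is a 3-coboundary) if and only if s = t. In particular, Φ_s is a 3-coboundary if and only if s = 0. -/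
/-- A function `φ : G × G × G → ℂ∖{0}` on the group `ℤ_n` is a 3-coboundary if there is
`f : G × G → ℂ∖{0}` with `φ(x,y,z) = f(y,z)·f(x,yz)·f(xy,z)⁻¹·f(x,y)⁻¹` for all `x,y,z`. -/
def IsThreeCoboundary (n : ℕ) (φ : ZMod n → ZMod n → ZMod n → ℂ) : Prop :=
  ∃ f : ZMod n → ZMod n → ℂ, (∀ x y, f x y ≠ 0) ∧
    ∀ x y z, φ x y z = f y z * f x (y + z) * (f (x + y) z)⁻¹ * (f x y)⁻¹

/-- The product of `Φ_s(g, g^j, g)` over all `j` equals `q^s`: only `j = n-1` contributes. -/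
lemma aux_prod_phi (m s : ℕ) (hm : 1 ≤ m) (q : ℂ) :
    ∏ y : ZMod (m + 1), PhiCocycle (m + 1) s q 1 y 1 = q ^ s := by
  haveI : Fact (1 < m + 1) := ⟨by omega⟩
  rw [Finset.prod_eq_single (-1 : ZMod (m+1))]
  · unfold PhiCocycle
    rw [ZMod.val_one, ZMod.val_neg_one]
    have : (m + 1) % (m + 1) = 0 := Nat.mod_self _
    rw [this]
    simp [Nat.div_self (by omega : 0 < m + 1)]
  · intro y _ hy
    unfold PhiCocycle
    have hv : y.val < m + 1 := y.val_lt
    have hv' : y.val ≠ m := by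
      intro h
      apply hy
      apply ZMod.val_injective
      rw [h, ZMod.val_neg_one]
    rw [ZMod.val_one]
    have : (y.val + 1) % (m + 1) = y.val + 1 := Nat.mod_eq_of_lt (by omega)
    rw [this]
    simp
  · simp

/-- The corresponding product of any coboundary telescopes to `1`. -/
lemma aux_prod_cob (m : ℕ) (f : ZMod (m+1) → ZMod (m+1) → ℂ)
    (hf : ∀ x y, f x y ≠ 0) :
    ∏ y : ZMod (m + 1),
      (f y 1 * f 1 (y + 1) * (f (1 + y) 1)⁻¹ * (f 1 y)⁻¹) = 1 := by
  rw [Finset.prod_mul_distrib, Finset.prod_mul_distrib, Finset.prod_mul_distrib,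
    Finset.prod_inv_distrib, Finset.prod_inv_distrib]
  have h1 : ∏ y : ZMod (m+1), f (1 + y) 1 = ∏ y : ZMod (m+1), f y 1 :=
    Fintype.prod_equiv (Equiv.addLeft 1) _ _ (fun y => rfl)
  have h2 : ∏ y : ZMod (m+1), f 1 (y + 1) = ∏ y : ZMod (m+1), f 1 y :=
    Fintype.prod_equiv (Equiv.addRight 1) _ _ (fun y => rfl)
  rw [h1, h2]
  have ha : (∏ x : ZMod (m+1), f x 1) ≠ 0 :=
    Finset.prod_ne_zero_iff.mpr fun x _ => hf x 1
  have hb : (∏ x : ZMod (m+1), f 1 x) ≠ 0 :=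
    Finset.prod_ne_zero_iff.mpr fun x _ => hf 1 x
  field_simp

lemma aux_main (m : ℕ) (hm : 1 ≤ m) (q : ℂ) (hq : IsPrimitiveRoot q (m + 1))
    (s t : ℕ) (hs : s ≤ m) (ht : t ≤ m) :
    IsThreeCoboundary (m + 1)
      (fun x y z => PhiCocycle (m+1) s q x y z / PhiCocycle (m+1) t q x y z) ↔ s = t := by
  have hq0 : q ≠ 0 := hq.ne_zero (by omega)
  constructor
  · rintro ⟨f, hf, hrel⟩
    have key : q ^ s / q ^ t = 1 := by
      calc q ^ s / q ^ t
          = (∏ y : ZMod (m+1), PhiCocycle (m+1) s q 1 y 1) /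
            (∏ y : ZMod (m+1), PhiCocycle (m+1) t q 1 y 1) := by
            rw [aux_prod_phi m s hm q, aux_prod_phi m t hm q]
        _ = ∏ y : ZMod (m+1),
              (PhiCocycle (m+1) s q 1 y 1 / PhiCocycle (m+1) t q 1 y 1) := by
            rw [Finset.prod_div_distrib]
        _ = ∏ y : ZMod (m+1),
              (f y 1 * f 1 (y + 1) * (f (1 + y) 1)⁻¹ * (f 1 y)⁻¹) := by
            refine Finset.prod_congr rfl fun y _ => ?_
            exact hrel 1 y 1
        _ = 1 := aux_prod_cob m f hf
    have : q ^ s = q ^ t := by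
      field_simp at key
      exact key
    exact hq.pow_inj (by omega) (by omega) this
  · rintro rfl
    refine ⟨fun _ _ => 1, fun _ _ => one_ne_zero, fun x y z => ?_⟩
    have : PhiCocycle (m+1) s q x y z ≠ 0 := pow_ne_zero _ hq0
    simp [div_self this]

/-- For `0 ≤ s,t ≤ n-1`, the 3-cocycles `Φ_s` and `Φ_t` are cohomologous (i.e. their
pointwise quotient is a 3-coboundary) iff `s = t`; in particular `Φ_s` is a
3-coboundary iff `s = 0`. -/
theorem phiCocycle_cohomologous_iff
    (n : ℕ) (hn : 2 ≤ n) (q : ℂ) (hq : IsPrimitiveRoot q n)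
    (s t : ℕ) (hs : s ≤ n - 1) (ht : t ≤ n - 1) :
    (IsThreeCoboundary n
        (fun x y z => PhiCocycle n s q x y z / PhiCocycle n t q x y z) ↔ s = t) ∧
    (IsThreeCoboundary n (PhiCocycle n s q) ↔ s = 0) := by
  obtain ⟨m, rfl⟩ : ∃ m, n = m + 1 := ⟨n - 1, by omega⟩
  have hm : 1 ≤ m := by omega
  have hs' : s ≤ m := by omega
  have ht' : t ≤ m := by omega
  constructor
  · exact aux_main m hm q hq s t hs' ht'
  · have h0 : (fun x y z => PhiCocycle (m+1) s q x y z / PhiCocycle (m+1) 0 q x y z)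
        = PhiCocycle (m+1) s q := by
      funext x y z
      have : PhiCocycle (m+1) 0 q x y z = 1 := by
        unfold PhiCocycle; simp
      rw [this, div_one]
    have := aux_main m hm q hq s 0 hs' (by omega)
    rw [h0] at this
    exact this
end

section
/- Let G be a group, let Φ : G × G × G → ℂ∖{0} be a normalized 3-cocycle on G (so Φ(y,z,w)Φ(x,yz,w)Φ(x,y,z) = Φ(xy,z,w)Φ(x,y,zw) for all x,y,z,w ∈ G, and Φ(x,1,y) = 1), and let g ∈ G. Define, for elements e, f of the centralizer Z of g in G, Φ̃_g(e,f) = Φ(e,f,g)·Φ(ef,f^{-1},e^{-1})·Φ(e,fg,f^{-1}) / (Φ(efg,f^{-1},e^{-1})·Φ(e,f,f^{-1})). Then Φ̃_g is a 2-cocycle on Z, i.e., Φ̃_g(f,h)·Φ̃_g(e,fh) = Φ̃_g(e,f)·Φ̃_g(ef,h) for all e, f, h ∈ Z. -/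
/-- Given a 3-cocycle `Φ` on a group `G` and `g ∈ G`, the function
`Φ̃_g(e,f) = Φ(e,f,g)·Φ(ef,f⁻¹,e⁻¹)·Φ(e,fg,f⁻¹) / (Φ(efg,f⁻¹,e⁻¹)·Φ(e,f,f⁻¹))`
defined on the centralizer of `g`. -/
noncomputable def PhiTilde {G : Type*} [Group G] (Φ : G → G → G → ℂ) (g a b : G) : ℂ :=
  Φ a b g * Φ (a * b) b⁻¹ a⁻¹ * Φ a (b * g) b⁻¹ /
    (Φ (a * b * g) b⁻¹ a⁻¹ * Φ a b b⁻¹)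

/-- If `Φ` is a normalized 3-cocycle on `G` with values in `ℂ∖{0}` and `g ∈ G`, then
`Φ̃_g` is a 2-cocycle on the centralizer `Z` of `g` in `G`. -/
theorem phiTilde_is_two_cocycle_on_centralizer
    {G : Type*} [Group G] (Φ : G → G → G → ℂ)
    (hne : ∀ x y z, Φ x y z ≠ 0)
    (hcoc : ∀ x y z w,
      Φ y z w * Φ x (y * z) w * Φ x y z = Φ (x * y) z w * Φ x y (z * w))
    (hnorm : ∀ x y, Φ x 1 y = 1)
    (g : G) :
    ∀ e f h : G, e ∈ Subgroup.centralizer {g} → f ∈ Subgroup.centralizer {g} →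
      h ∈ Subgroup.centralizer {g} →
      PhiTilde Φ g f h * PhiTilde Φ g e (f * h) =
        PhiTilde Φ g e f * PhiTilde Φ g (e * f) h := by
  have hn1 : ∀ x y : G, Φ 1 x y = 1 := by
    intro x y
    have t := hcoc 1 1 x y
    simp only [hnorm, one_mul, mul_one] at t
    exact mul_right_cancel₀ (hne 1 x y) (t.trans (one_mul _).symm)
  have hn3 : ∀ x y : G, Φ x y 1 = 1 := by
    intro x y
    have t := hcoc x y 1 y
    simp only [hnorm, one_mul, mul_one] at t
    exact mul_left_cancel₀ (hne x y y) (t.trans (mul_one _).symm)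
  intro e f h he hf hh
  have cge : Commute g e := Subgroup.mem_centralizer_iff.mp he g rfl
  have cgf : Commute g f := Subgroup.mem_centralizer_iff.mp hf g rfl
  have cgh : Commute g h := Subgroup.mem_centralizer_iff.mp hh g rfl
  have hge' : ∀ x : G, g * (e * x) = e * (g * x) := fun x => by
    rw [← mul_assoc, cge.eq, mul_assoc]
  have hgf' : ∀ x : G, g * (f * x) = f * (g * x) := fun x => by
    rw [← mul_assoc, cgf.eq, mul_assoc]
  have hgh' : ∀ x : G, g * (h * x) = h * (g * x) := fun x => by
    rw [← mul_assoc, cgh.eq, mul_assoc]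
  have hgei' : ∀ x : G, g * (e⁻¹ * x) = e⁻¹ * (g * x) := fun x => by
    rw [← mul_assoc, cge.inv_right.eq, mul_assoc]
  have hgfi' : ∀ x : G, g * (f⁻¹ * x) = f⁻¹ * (g * x) := fun x => by
    rw [← mul_assoc, cgf.inv_right.eq, mul_assoc]
  have hghi' : ∀ x : G, g * (h⁻¹ * x) = h⁻¹ * (g * x) := fun x => by
    rw [← mul_assoc, cgh.inv_right.eq, mul_assoc]
  have hc1 : Φ e f f⁻¹ * (Φ g (e * f) f⁻¹ * (Φ g e f)) = Φ (e * g) f f⁻¹ := by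
    have t := hcoc (g) (e) (f) (f⁻¹)
    simp only [mul_assoc, mul_inv_rev, mul_inv_cancel, inv_mul_cancel, mul_inv_cancel_left, inv_mul_cancel_left, one_mul, mul_one, hnorm, hn1, hn3, cge.eq, cgf.eq, cgh.eq, cge.inv_right.eq, cgf.inv_right.eq, cgh.inv_right.eq, hge', hgf', hgh', hgei', hgfi', hghi'] at t
    exact t
  have hc2 : Φ g f f⁻¹ * (Φ e (f * g) f⁻¹ * (Φ e g f)) = Φ (e * g) f f⁻¹ := by
    have t := hcoc (e) (g) (f) (f⁻¹)
    simp only [mul_assoc, mul_inv_rev, mul_inv_cancel, inv_mul_cancel, mul_inv_cancel_left, inv_mul_cancel_left, one_mul, mul_one, hnorm, hn1, hn3, cge.eq, cgf.eq, cgh.eq, cge.inv_right.eq, cgf.inv_right.eq, cgh.inv_right.eq, hge', hgf', hgh', hgei', hgfi', hghi'] at t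
    exact t
  have hc3 : Φ f h g * (Φ e (f * h) g * (Φ e f h)) = Φ (e * f) h g * (Φ e f (h * g)) := by
    have t := hcoc (e) (f) (h) (g)
    simp only [mul_assoc, mul_inv_rev, mul_inv_cancel, inv_mul_cancel, mul_inv_cancel_left, inv_mul_cancel_left, one_mul, mul_one, hnorm, hn1, hn3, cge.eq, cgf.eq, cgh.eq, cge.inv_right.eq, cgf.inv_right.eq, cgh.inv_right.eq, hge', hgf', hgh', hgei', hgfi', hghi'] at t
    exact t
  have hc4 : Φ f h h⁻¹ * (Φ e (f * h) h⁻¹ * (Φ e f h)) = Φ (e * f) h h⁻¹ := by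
    have t := hcoc (e) (f) (h) (h⁻¹)
    simp only [mul_assoc, mul_inv_rev, mul_inv_cancel, inv_mul_cancel, mul_inv_cancel_left, inv_mul_cancel_left, one_mul, mul_one, hnorm, hn1, hn3, cge.eq, cgf.eq, cgh.eq, cge.inv_right.eq, cgf.inv_right.eq, cgh.inv_right.eq, hge', hgf', hgh', hgei', hgfi', hghi'] at t
    exact t
  have hc5 : Φ e (f * h) h⁻¹ * (Φ g (e * (f * h)) h⁻¹ * (Φ g e (f * h))) = Φ (e * g) (f * h) h⁻¹ * (Φ g e f) := by
    have t := hcoc (g) (e) (f * h) (h⁻¹)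
    simp only [mul_assoc, mul_inv_rev, mul_inv_cancel, inv_mul_cancel, mul_inv_cancel_left, inv_mul_cancel_left, one_mul, mul_one, hnorm, hn1, hn3, cge.eq, cgf.eq, cgh.eq, cge.inv_right.eq, cgf.inv_right.eq, cgh.inv_right.eq, hge', hgf', hgh', hgei', hgfi', hghi'] at t
    exact t
  have hc6 : Φ (e * f) f⁻¹ e⁻¹ * (Φ g e e⁻¹ * (Φ g (e * f) f⁻¹)) = Φ (e * (f * g)) f⁻¹ e⁻¹ * (Φ g (e * f) (f⁻¹ * e⁻¹)) := by
    have t := hcoc (g) (e * f) (f⁻¹) (e⁻¹)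
    simp only [mul_assoc, mul_inv_rev, mul_inv_cancel, inv_mul_cancel, mul_inv_cancel_left, inv_mul_cancel_left, one_mul, mul_one, hnorm, hn1, hn3, cge.eq, cgf.eq, cgh.eq, cge.inv_right.eq, cgf.inv_right.eq, cgh.inv_right.eq, hge', hgf', hgh', hgei', hgfi', hghi'] at t
    exact t
  have hc7 : Φ (f * h) h⁻¹ f⁻¹ * (Φ g f f⁻¹ * (Φ g (f * h) h⁻¹)) = Φ (f * (h * g)) h⁻¹ f⁻¹ * (Φ g (f * h) (h⁻¹ * f⁻¹)) := by
    have t := hcoc (g) (f * h) (h⁻¹) (f⁻¹)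
    simp only [mul_assoc, mul_inv_rev, mul_inv_cancel, inv_mul_cancel, mul_inv_cancel_left, inv_mul_cancel_left, one_mul, mul_one, hnorm, hn1, hn3, cge.eq, cgf.eq, cgh.eq, cge.inv_right.eq, cgf.inv_right.eq, cgh.inv_right.eq, hge', hgf', hgh', hgei', hgfi', hghi'] at t
    exact t
  have hc8 : Φ g (f * h) h⁻¹ * (Φ e (f * (h * g)) h⁻¹ * (Φ e g (f * h))) = Φ (e * g) (f * h) h⁻¹ * (Φ e g f) := by
    have t := hcoc (e) (g) (f * h) (h⁻¹)
    simp only [mul_assoc, mul_inv_rev, mul_inv_cancel, inv_mul_cancel, mul_inv_cancel_left, inv_mul_cancel_left, one_mul, mul_one, hnorm, hn1, hn3, cge.eq, cgf.eq, cgh.eq, cge.inv_right.eq, cgf.inv_right.eq, cgh.inv_right.eq, hge', hgf', hgh', hgei', hgfi', hghi'] at t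
    exact t
  have hc9 : Φ f (h * g) h⁻¹ * (Φ e (f * (h * g)) h⁻¹ * (Φ e f (h * g))) = Φ (e * f) (h * g) h⁻¹ * (Φ e f g) := by
    have t := hcoc (e) (f) (h * g) (h⁻¹)
    simp only [mul_assoc, mul_inv_rev, mul_inv_cancel, inv_mul_cancel, mul_inv_cancel_left, inv_mul_cancel_left, one_mul, mul_one, hnorm, hn1, hn3, cge.eq, cgf.eq, cgh.eq, cge.inv_right.eq, cgf.inv_right.eq, cgh.inv_right.eq, hge', hgf', hgh', hgei', hgfi', hghi'] at t
    exact t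
  have hc10 : Φ e (f * h) (h⁻¹ * f⁻¹) * (Φ g (e * (f * h)) (h⁻¹ * f⁻¹) * (Φ g e (f * h))) = Φ (e * g) (f * h) (h⁻¹ * f⁻¹) := by
    have t := hcoc (g) (e) (f * h) (h⁻¹ * f⁻¹)
    simp only [mul_assoc, mul_inv_rev, mul_inv_cancel, inv_mul_cancel, mul_inv_cancel_left, inv_mul_cancel_left, one_mul, mul_one, hnorm, hn1, hn3, cge.eq, cgf.eq, cgh.eq, cge.inv_right.eq, cgf.inv_right.eq, cgh.inv_right.eq, hge', hgf', hgh', hgei', hgfi', hghi'] at t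
    exact t
  have hc11 : Φ g (f * h) (h⁻¹ * f⁻¹) * (Φ e (f * (h * g)) (h⁻¹ * f⁻¹) * (Φ e g (f * h))) = Φ (e * g) (f * h) (h⁻¹ * f⁻¹) := by
    have t := hcoc (e) (g) (f * h) (h⁻¹ * f⁻¹)
    simp only [mul_assoc, mul_inv_rev, mul_inv_cancel, inv_mul_cancel, mul_inv_cancel_left, inv_mul_cancel_left, one_mul, mul_one, hnorm, hn1, hn3, cge.eq, cgf.eq, cgh.eq, cge.inv_right.eq, cgf.inv_right.eq, cgh.inv_right.eq, hge', hgf', hgh', hgei', hgfi', hghi'] at t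
    exact t
  have hc12 : Φ (e * (f * h)) h⁻¹ (f⁻¹ * e⁻¹) * (Φ g (e * f) (f⁻¹ * e⁻¹) * (Φ g (e * (f * h)) h⁻¹)) = Φ (e * (f * (h * g))) h⁻¹ (f⁻¹ * e⁻¹) * (Φ g (e * (f * h)) (h⁻¹ * (f⁻¹ * e⁻¹))) := by
    have t := hcoc (g) (e * (f * h)) (h⁻¹) (f⁻¹ * e⁻¹)
    simp only [mul_assoc, mul_inv_rev, mul_inv_cancel, inv_mul_cancel, mul_inv_cancel_left, inv_mul_cancel_left, one_mul, mul_one, hnorm, hn1, hn3, cge.eq, cgf.eq, cgh.eq, cge.inv_right.eq, cgf.inv_right.eq, cgh.inv_right.eq, hge', hgf', hgh', hgei', hgfi', hghi'] at t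
    exact t
  have hc13 : Φ (e * (f * h)) (h⁻¹ * f⁻¹) e⁻¹ * (Φ g e e⁻¹ * (Φ g (e * (f * h)) (h⁻¹ * f⁻¹))) = Φ (e * (f * (h * g))) (h⁻¹ * f⁻¹) e⁻¹ * (Φ g (e * (f * h)) (h⁻¹ * (f⁻¹ * e⁻¹))) := by
    have t := hcoc (g) (e * (f * h)) (h⁻¹ * f⁻¹) (e⁻¹)
    simp only [mul_assoc, mul_inv_rev, mul_inv_cancel, inv_mul_cancel, mul_inv_cancel_left, inv_mul_cancel_left, one_mul, mul_one, hnorm, hn1, hn3, cge.eq, cgf.eq, cgh.eq, cge.inv_right.eq, cgf.inv_right.eq, cgh.inv_right.eq, hge', hgf', hgh', hgei', hgfi', hghi'] at t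
    exact t
  have key : (Φ f h g * (Φ (f * h) h⁻¹ f⁻¹ * (Φ f (h * g) h⁻¹ * (Φ e (f * h) g * (Φ (e * (f * h)) (h⁻¹ * f⁻¹) e⁻¹ * (Φ e (f * (h * g)) (h⁻¹ * f⁻¹) * (Φ (e * (f * g)) f⁻¹ e⁻¹ * (Φ e f f⁻¹ * (Φ (e * (f * (h * g))) h⁻¹ (f⁻¹ * e⁻¹) * (Φ (e * f) h h⁻¹)))))))))) * ((Φ (e * g) f f⁻¹) * ((Φ g f f⁻¹ * (Φ e (f * g) f⁻¹ * (Φ e g f))) * ((Φ (e * f) h g * (Φ e f (h * g))) * ((Φ f h h⁻¹ * (Φ e (f * h) h⁻¹ * (Φ e f h))) * ((Φ (e * g) (f * h) h⁻¹ * (Φ g e f)) * ((Φ (e * f) f⁻¹ e⁻¹ * (Φ g e e⁻¹ * (Φ g (e * f) f⁻¹))) * ((Φ (f * (h * g)) h⁻¹ f⁻¹ * (Φ g (f * h) (h⁻¹ * f⁻¹))) * ((Φ g (f * h) h⁻¹ * (Φ e (f * (h * g)) h⁻¹ * (Φ e g (f * h)))) * ((Φ (e * f) (h * g) h⁻¹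 * (Φ e f g)) * ((Φ e (f * h) (h⁻¹ * f⁻¹) * (Φ g (e * (f * h)) (h⁻¹ * f⁻¹) * (Φ g e (f * h)))) * ((Φ (e * g) (f * h) (h⁻¹ * f⁻¹)) * ((Φ (e * (f * h)) h⁻¹ (f⁻¹ * e⁻¹) * (Φ g (e * f) (f⁻¹ * e⁻¹) * (Φ g (e * (f * h)) h⁻¹))) * ((Φ (e * (f * (h * g))) (h⁻¹ * f⁻¹) e⁻¹ * (Φ g (e * (f * h)) (h⁻¹ * (f⁻¹ * e⁻¹))))))))))))))))) = (Φ (f * (h * g)) h⁻¹ f⁻¹ * (Φ f h h⁻¹ * (Φ (e * (f * (h * g))) (h⁻¹ * f⁻¹) e⁻¹ * (Φ e (f * h) (h⁻¹ * f⁻¹) * (Φ e f g * (Φ (e * f) f⁻¹ e⁻¹ * (Φ e (f * g) f⁻¹ * (Φ (e * f) h g * (Φ (e * (f * h)) h⁻¹ (f⁻¹ * e⁻¹) * (Φ (e * f) (h * g) h⁻¹)))))))))) * ((Φ e f f⁻¹ * (Φ g (e * f) f⁻¹ * (Φ g e f))) * ((Φ (e * g) f f⁻¹) * ((Φ f h g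 * (Φ e (f * h) g * (Φ e f h))) * ((Φ (e * f) h h⁻¹) * ((Φ e (f * h) h⁻¹ * (Φ g (e * (f * h)) h⁻¹ * (Φ g e (f * h)))) * ((Φ (e * (f * g)) f⁻¹ e⁻¹ * (Φ g (e * f) (f⁻¹ * e⁻¹))) * ((Φ (f * h) h⁻¹ f⁻¹ * (Φ g f f⁻¹ * (Φ g (f * h) h⁻¹))) * ((Φ (e * g) (f * h) h⁻¹ * (Φ e g f)) * ((Φ f (h * g) h⁻¹ * (Φ e (f * (h * g)) h⁻¹ * (Φ e f (h * g)))) * ((Φ (e * g) (f * h) (h⁻¹ * f⁻¹)) * ((Φ g (f * h) (h⁻¹ * f⁻¹) * (Φ e (f * (h * g)) (h⁻¹ * f⁻¹) * (Φ e g (f * h)))) * ((Φ (e * (f * (h * g))) h⁻¹ (f⁻¹ * e⁻¹) * (Φ g (e * (f * h)) (h⁻¹ * (f⁻¹ * e⁻¹)))) * ((Φ (e * (f * h)) (h⁻¹ * f⁻¹) e⁻¹ * (Φ g e e⁻¹ * (Φ g (e * (f * h)) (h⁻¹ * f⁻¹))))))))))))))))) := by ring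
  have hC : ((Φ (e * g) f f⁻¹) * ((Φ g f f⁻¹ * (Φ e (f * g) f⁻¹ * (Φ e g f))) * ((Φ (e * f) h g * (Φ e f (h * g))) * ((Φ f h h⁻¹ * (Φ e (f * h) h⁻¹ * (Φ e f h))) * ((Φ (e * g) (f * h) h⁻¹ * (Φ g e f)) * ((Φ (e * f) f⁻¹ e⁻¹ * (Φ g e e⁻¹ * (Φ g (e * f) f⁻¹))) * ((Φ (f * (h * g)) h⁻¹ f⁻¹ * (Φ g (f * h) (h⁻¹ * f⁻¹))) * ((Φ g (f * h) h⁻¹ * (Φ e (f * (h * g)) h⁻¹ * (Φ e g (f * h)))) * ((Φ (e * f) (h * g) h⁻¹ * (Φ e f g)) * ((Φ e (f * h) (h⁻¹ * f⁻¹) * (Φ g (e * (f * h)) (h⁻¹ * f⁻¹) * (Φ g e (f * h)))) * ((Φ (e * g) (f * h) (h⁻¹ * f⁻¹)) * ((Φ (e * (f * h)) h⁻¹ (f⁻¹ * e⁻¹) * (Φ g (e * f) (f⁻¹ * e⁻¹) * (Φ g (e * (f * h)) h⁻¹))) * ((Φ (e * (f * (h * g))) (h⁻¹ * f⁻¹)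 e⁻¹ * (Φ g (e * (f * h)) (h⁻¹ * (f⁻¹ * e⁻¹))))))))))))))))) = ((Φ e f f⁻¹ * (Φ g (e * f) f⁻¹ * (Φ g e f))) * ((Φ (e * g) f f⁻¹) * ((Φ f h g * (Φ e (f * h) g * (Φ e f h))) * ((Φ (e * f) h h⁻¹) * ((Φ e (f * h) h⁻¹ * (Φ g (e * (f * h)) h⁻¹ * (Φ g e (f * h)))) * ((Φ (e * (f * g)) f⁻¹ e⁻¹ * (Φ g (e * f) (f⁻¹ * e⁻¹))) * ((Φ (f * h) h⁻¹ f⁻¹ * (Φ g f f⁻¹ * (Φ g (f * h) h⁻¹))) * ((Φ (e * g) (f * h) h⁻¹ * (Φ e g f)) * ((Φ f (h * g) h⁻¹ * (Φ e (f * (h * g)) h⁻¹ * (Φ e f (h * g)))) * ((Φ (e * g) (f * h) (h⁻¹ * f⁻¹)) * ((Φ g (f * h) (h⁻¹ * f⁻¹) * (Φ e (f * (h * g)) (h⁻¹ * f⁻¹) * (Φ e g (f * h)))) * ((Φ (e * (f * (h * g))) h⁻¹ (f⁻¹ * e⁻¹) * (Φ g (e * (f * h)) (h⁻¹ * (f⁻¹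 * e⁻¹)))) * ((Φ (e * (f * h)) (h⁻¹ * f⁻¹) e⁻¹ * (Φ g e e⁻¹ * (Φ g (e * (f * h)) (h⁻¹ * f⁻¹))))))))))))))))) := by
    rw [hc1, hc2, hc3, hc4, hc5, hc6, hc7, hc8, hc9, hc10, hc11, hc12, hc13]
  have hC2ne : ((Φ e f f⁻¹ * (Φ g (e * f) f⁻¹ * (Φ g e f))) * ((Φ (e * g) f f⁻¹) * ((Φ f h g * (Φ e (f * h) g * (Φ e f h))) * ((Φ (e * f) h h⁻¹) * ((Φ e (f * h) h⁻¹ * (Φ g (e * (f * h)) h⁻¹ * (Φ g e (f * h)))) * ((Φ (e * (f * g)) f⁻¹ e⁻¹ * (Φ g (e * f) (f⁻¹ * e⁻¹))) * ((Φ (f * h) h⁻¹ f⁻¹ * (Φ g f f⁻¹ * (Φ g (f * h) h⁻¹))) * ((Φ (e * g) (f * h) h⁻¹ * (Φ e g f)) * ((Φ f (h * g) h⁻¹ * (Φ e (f * (h * g)) h⁻¹ * (Φ e f (h * g)))) * ((Φ (e * g) (f * h) (h⁻¹ * f⁻¹)) * ((Φ g (f * h) (h⁻¹ * f⁻¹)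 * (Φ e (f * (h * g)) (h⁻¹ * f⁻¹) * (Φ e g (f * h)))) * ((Φ (e * (f * (h * g))) h⁻¹ (f⁻¹ * e⁻¹) * (Φ g (e * (f * h)) (h⁻¹ * (f⁻¹ * e⁻¹)))) * ((Φ (e * (f * h)) (h⁻¹ * f⁻¹) e⁻¹ * (Φ g e e⁻¹ * (Φ g (e * (f * h)) (h⁻¹ * f⁻¹))))))))))))))))) ≠ 0 := by (repeat' apply mul_ne_zero) <;> exact hne _ _ _
  rw [hC] at key
  have main : (Φ f h g * (Φ (f * h) h⁻¹ f⁻¹ * (Φ f (h * g) h⁻¹ * (Φ e (f * h) g * (Φ (e * (f * h)) (h⁻¹ * f⁻¹) e⁻¹ * (Φ e (f * (h * g)) (h⁻¹ * f⁻¹) * (Φ (e * (f * g)) f⁻¹ e⁻¹ * (Φ e f f⁻¹ * (Φ (e * (f * (h * g))) h⁻¹ (f⁻¹ * e⁻¹) * (Φ (e * f) h h⁻¹)))))))))) = (Φ (f * (h * g)) h⁻¹ f⁻¹ * (Φ f h h⁻¹ * (Φ (e * (f * (h * g))) (h⁻¹ * f⁻¹) e⁻¹ * (Φ e (f * h) (h⁻¹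 * f⁻¹) * (Φ e f g * (Φ (e * f) f⁻¹ e⁻¹ * (Φ e (f * g) f⁻¹ * (Φ (e * f) h g * (Φ (e * (f * h)) h⁻¹ (f⁻¹ * e⁻¹) * (Φ (e * f) (h * g) h⁻¹)))))))))) := mul_right_cancel₀ hC2ne key
  simp only [PhiTilde]
  rw [div_mul_div_comm, div_mul_div_comm,
    div_eq_div_iff (by (repeat' apply mul_ne_zero) <;> exact hne _ _ _) (by (repeat' apply mul_ne_zero) <;> exact hne _ _ _)]
  simp only [mul_assoc, mul_inv_rev, mul_inv_cancel, inv_mul_cancel, mul_inv_cancel_left, inv_mul_cancel_left, one_mul, mul_one, hnorm, hn1, hn3, cge.eq, cgf.eq, cgh.eq, cge.inv_right.eq, cgf.inv_right.eq, cgh.inv_right.eq, hge', hgf', hgh', hgei', hgfi', hghi']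
  linear_combination main
end

section
/- The function σ_s is a normalized 2-cocycle on ℤ_n with values in the nonzero complex numbers; that is, σ_s takes nonzero values, σ_s(y,z)·σ_s(x,yz) = σ_s(x,y)·σ_s(xy,z) for all x, y, z ∈ ℤ_n, and σ_s(g^0, x) = 1 = σ_s(x, g^0) for all x ∈ ℤ_n. -/
/-- The 2-cocycle `σ_s` on `ℤ_n` defined from `Φ_s` by
`σ_s(x,y) = Φ_s(x,y,g)·Φ_s(xy,y⁻¹,x⁻¹)·Φ_s(x,yg,y⁻¹) / (Φ_s(xyg,y⁻¹,x⁻¹)·Φ_s(x,y,y⁻¹))`,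
where the generator `g` corresponds to `(1 : ZMod n)`. -/
noncomputable def SigmaCocycle (n s : ℕ) (q : ℂ) (x y : ZMod n) : ℂ :=
  PhiCocycle n s q x y 1 * PhiCocycle n s q (x + y) (-y) (-x) *
      PhiCocycle n s q x (y + 1) (-y) /
    (PhiCocycle n s q (x + y + 1) (-y) (-x) * PhiCocycle n s q x y (-y))

private lemma div2 {n m : ℕ} (hn : 0 < n) (h : m < 2 * n) :
    (m / n = 0 ∧ m < n) ∨ (m / n = 1 ∧ n ≤ m) := by
  rcases Nat.lt_or_ge m n with h'|h'
  · exact Or.inl ⟨Nat.div_eq_of_lt h', h'⟩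
  · right
    refine ⟨?_, h'⟩
    rw [Nat.div_eq_sub_div hn h', Nat.div_eq_of_lt (by omega)]

private lemma mod2 {n m : ℕ} (h : m < 2 * n) :
    m % n = m ∨ m % n + n = m := by
  rcases Nat.lt_or_ge m n with h'|h'
  · exact Or.inl (Nat.mod_eq_of_lt h')
  · right
    rw [Nat.mod_eq_sub_mod h', Nat.mod_eq_of_lt (by omega)]
    omega

private lemma sub_mod_div {n : ℕ} (hn : 0 < n) (m : ℕ) :
    (m - m % n) / n = m / n := by
  have h := Nat.mod_add_div m n
  have : m - m % n = n * (m / n) := by omega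
  rw [this, Nat.mul_div_cancel_left _ hn]

private lemma key (n a b u v w p r q1 q2 q3 t q5 : ℕ) (hn : 2 ≤ n) (ha : a < n) (hb : b < n)
    (hp : (a = 0 ∧ p = 0) ∨ (a ≠ 0 ∧ p + a = n))
    (hr : (b = 0 ∧ r = 0) ∨ (b ≠ 0 ∧ r + b = n))
    (hu : u < n) (hu2 : u = a + b ∨ u + n = a + b)
    (hv : v < n) (hv2 : v = u + 1 ∨ v + n = u + 1)
    (hw : w < n) (hw2 : w = b + 1 ∨ w + n = b + 1)
    (h1 : (q1 = 0 ∧ b + 1 < n) ∨ (q1 = 1 ∧ n ≤ b + 1))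
    (h2 : (q2 = 0 ∧ r + p < n) ∨ (q2 = 1 ∧ n ≤ r + p))
    (h3 : (q3 = 0 ∧ w + r < n) ∨ (q3 = 1 ∧ n ≤ w + r))
    (ht : (t = 0 ∧ p + r < n) ∨ (t = 1 ∧ n ≤ p + r))
    (h5 : (q5 = 0 ∧ b + r < n) ∨ (q5 = 1 ∧ n ≤ b + r)) :
    a * q1 + u * q2 + a * q3 + t = v * q2 + a * q5 ∨
      a * q1 + u * q2 + a * q3 + t = v * q2 + a * q5 + n := by
  rcases h1 with ⟨rfl, h1⟩ | ⟨rfl, h1⟩ <;> rcases h2 with ⟨rfl, h2⟩ | ⟨rfl, h2⟩ <;>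
    rcases h3 with ⟨rfl, h3⟩ | ⟨rfl, h3⟩ <;> rcases ht with ⟨rfl, ht⟩ | ⟨rfl, ht⟩ <;>
    rcases h5 with ⟨rfl, h5⟩ | ⟨rfl, h5⟩ <;> omega

private lemma helper {q : ℂ} (hq0 : q ≠ 0) {A B C D E F : ℕ}
    (h : q ^ (A + B + C + F) = q ^ (D + E)) :
    q ^ A * q ^ B * q ^ C / (q ^ D * q ^ E) = (q ^ F)⁻¹ := by
  rw [div_eq_iff (by exact mul_ne_zero (pow_ne_zero _ hq0) (pow_ne_zero _ hq0))]
  rw [inv_mul_eq_div, eq_div_iff (pow_ne_zero _ hq0)]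
  rw [← pow_add, ← pow_add, ← pow_add, ← pow_add, h]

private lemma sigma_eq (n s : ℕ) (hn : 2 ≤ n) (q : ℂ) (hq0 : q ≠ 0) (hq1 : q ^ n = 1)
    (x y : ZMod n) :
    SigmaCocycle n s q x y = (q ^ (s * (((-x).val + (-y).val) / n)))⁻¹ := by
  haveI : NeZero n := ⟨by omega⟩
  haveI : Fact (1 < n) := ⟨by omega⟩
  have hn0 : 0 < n := by omega
  unfold SigmaCocycle PhiCocycle
  simp only [sub_mod_div hn0, ZMod.val_one]
  set a := x.val with hadef
  set b := y.val with hbdef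
  set p := (-x).val with hpdef
  set r := (-y).val with hrdef
  set u := (x + y).val with hudef
  set v := (x + y + 1).val with hvdef
  set w := (y + 1).val with hwdef
  have ha : a < n := ZMod.val_lt x
  have hb : b < n := ZMod.val_lt y
  have hpl : p < n := ZMod.val_lt _
  have hrl : r < n := ZMod.val_lt _
  have hul : u < n := ZMod.val_lt _
  have hvl : v < n := ZMod.val_lt _
  have hwl : w < n := ZMod.val_lt _
  have hp : (a = 0 ∧ p = 0) ∨ (a ≠ 0 ∧ p + a = n) := by
    rw [hpdef, ZMod.neg_val]
    split_ifs with h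
    · left; exact ⟨by rw [hadef, h, ZMod.val_zero], rfl⟩
    · right
      have : a ≠ 0 := by
        intro h0
        exact h ((ZMod.val_eq_zero x).mp h0)
      exact ⟨this, by omega⟩
  have hr' : (b = 0 ∧ r = 0) ∨ (b ≠ 0 ∧ r + b = n) := by
    rw [hrdef, ZMod.neg_val]
    split_ifs with h
    · left; exact ⟨by rw [hbdef, h, ZMod.val_zero], rfl⟩
    · right
      have : b ≠ 0 := by
        intro h0
        exact h ((ZMod.val_eq_zero y).mp h0)
      exact ⟨this, by omega⟩
  have hu2 : u = a + b ∨ u + n = a + b := by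
    rw [hudef, ZMod.val_add]
    exact mod2 (by omega)
  have hv2 : v = u + 1 ∨ v + n = u + 1 := by
    rw [hvdef, ZMod.val_add, ZMod.val_one]
    exact mod2 (by omega)
  have hw2 : w = b + 1 ∨ w + n = b + 1 := by
    rw [hwdef, ZMod.val_add, ZMod.val_one]
    exact mod2 (by omega)
  apply helper hq0
  have e1 : s * a * ((b + 1) / n) + s * u * ((r + p) / n) + s * a * ((w + r) / n)
      + s * ((p + r) / n)
      = s * (a * ((b + 1) / n) + u * ((r + p) / n) + a * ((w + r) / n) + (p + r) / n) := by
    ring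
  have e2 : s * v * ((r + p) / n) + s * a * ((b + r) / n)
      = s * (v * ((r + p) / n) + a * ((b + r) / n)) := by ring
  rw [e1, e2]
  have hk := key n a b u v w p r ((b + 1) / n) ((r + p) / n) ((w + r) / n) ((p + r) / n)
    ((b + r) / n) hn ha hb hp hr' hul hu2 hvl hv2 hwl hw2
    (div2 hn0 (by omega)) (div2 hn0 (by omega)) (div2 hn0 (by omega))
    (div2 hn0 (by omega)) (div2 hn0 (by omega))
  rcases hk with hk | hk
  · rw [hk]
  · rw [hk, Nat.mul_add, pow_add]
    have hsn : q ^ (s * n) = 1 := by rw [Nat.mul_comm, pow_mul, hq1, one_pow]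
    rw [hsn, mul_one]

private lemma carry {n : ℕ} (hn0 : 0 < n) (a b c : ℕ) :
    (b + c) / n + (a + (b + c) % n) / n = (a + b) / n + ((a + b) % n + c) / n := by
  have e1 : a + (b + c) % n + (b + c) / n * n = a + b + c := by
    have := Nat.mod_add_div' (b + c) n; omega
  have h1 : (a + b + c) / n = (a + (b + c) % n) / n + (b + c) / n := by
    rw [← e1, Nat.add_mul_div_right _ _ hn0]
  have e2 : (a + b) % n + c + (a + b) / n * n = a + b + c := by
    have := Nat.mod_add_div' (a + b) n; omega
  have h2 : (a + b + c) / n = ((a + b) % n + c) / n + (a + b) / n := by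
    rw [← e2, Nat.add_mul_div_right _ _ hn0]
  omega

/-- `σ_s` is a normalized 2-cocycle on `ℤ_n` with values in `ℂ∖{0}`. -/
theorem sigmaCocycle_is_normalized_two_cocycle
    (n : ℕ) (hn : 2 ≤ n) (q : ℂ) (hq : IsPrimitiveRoot q n)
    (s : ℕ) (hs : s ≤ n - 1) :
    (∀ x y : ZMod n, SigmaCocycle n s q x y ≠ 0) ∧
    (∀ x y z : ZMod n,
      SigmaCocycle n s q y z * SigmaCocycle n s q x (y + z) =
        SigmaCocycle n s q x y * SigmaCocycle n s q (x + y) z) ∧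
    (∀ x : ZMod n, SigmaCocycle n s q 0 x = 1 ∧ SigmaCocycle n s q x 0 = 1) := by
  haveI : NeZero n := ⟨by omega⟩
  have hn0 : 0 < n := by omega
  have hq0 : q ≠ 0 := hq.ne_zero (by omega)
  have hq1 : q ^ n = 1 := hq.pow_eq_one
  refine ⟨fun x y => ?_, fun x y z => ?_, fun x => ⟨?_, ?_⟩⟩
  · rw [sigma_eq n s hn q hq0 hq1]
    exact inv_ne_zero (pow_ne_zero _ hq0)
  · rw [sigma_eq n s hn q hq0 hq1, sigma_eq n s hn q hq0 hq1,
      sigma_eq n s hn q hq0 hq1, sigma_eq n s hn q hq0 hq1,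
      ← mul_inv, ← mul_inv, ← pow_add, ← pow_add, ← Nat.mul_add, ← Nat.mul_add]
    congr 3
    have hyz : (-(y + z)).val = ((-y).val + (-z).val) % n := by
      rw [neg_add, ZMod.val_add]
    have hxy : (-(x + y)).val = ((-x).val + (-y).val) % n := by
      rw [neg_add, ZMod.val_add]
    rw [hyz, hxy]
    exact carry hn0 (-x).val (-y).val (-z).val
  · rw [sigma_eq n s hn q hq0 hq1]
    have : (-(0 : ZMod n)).val = 0 := by rw [neg_zero, ZMod.val_zero]
    rw [this, Nat.zero_add, Nat.div_eq_of_lt (ZMod.val_lt _), Nat.mul_zero, pow_zero, inv_one]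
  · rw [sigma_eq n s hn q hq0 hq1]
    have : (-(0 : ZMod n)).val = 0 := by rw [neg_zero, ZMod.val_zero]
    rw [this, Nat.add_zero, Nat.div_eq_of_lt (ZMod.val_lt _), Nat.mul_zero, pow_zero, inv_one]
end

section
/- Let ρ : ℤ_n → ℂ∖{0} be a one-dimensional projective σ_s-representation, i.e., ρ(x)·ρ(y) = σ_s(x,y)·ρ(xy) for all x, y ∈ ℤ_n. Then λ = ρ(g) satisfies λ^n = 𝕢^s. -/
/-- If `ρ : ℤ_n → ℂ∖{0}` is a one-dimensional projective `σ_s`-representation, then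
`λ = ρ(g)` satisfies `λ^n = 𝕢^s`. -/
theorem one_dim_projective_rep_value_pow
    (n : ℕ) (hn : 2 ≤ n) (q : ℂ) (hq : IsPrimitiveRoot q n)
    (s : ℕ) (hs : s ≤ n - 1)
    (ρ : ZMod n → ℂ) (hρ : ∀ x, ρ x ≠ 0)
    (hmul : ∀ x y : ZMod n, ρ x * ρ y = SigmaCocycle n s q x y * ρ (x + y)) :
    (ρ 1) ^ n = q ^ s := by
  haveI : NeZero n := ⟨by omega⟩
  haveI : Fact (1 < n) := ⟨by omega⟩
  have hq0 : q ≠ 0 := hq.ne_zero (by omega)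
  have hqn : q ^ n = 1 := hq.pow_eq_one
  have val1 : (1 : ZMod n).val = 1 := ZMod.val_one n
  -- σ(0,0) = 1
  have sigma00 : SigmaCocycle n s q 0 0 = 1 := by
    simp [SigmaCocycle, PhiCocycle, ZMod.val_zero, val1]
  -- ρ 0 = 1
  have hρ0 : ρ 0 = 1 := by
    have h := hmul 0 0
    rw [sigma00, one_mul, add_zero] at h
    have := mul_right_cancel₀ (hρ 0) (h.trans (one_mul (ρ 0)).symm)
    exact this
  -- case n = 2
  rcases eq_or_lt_of_le hn with h2 | h3
  · subst h2
    have h11 : (1 : ZMod 2) + 1 = 0 := by decide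
    have hneg : (-1 : ZMod 2) = 1 := by decide
    have h := hmul 1 1
    rw [h11, hρ0, mul_one] at h
    have hss : q ^ s * q ^ s = 1 := by
      rw [← pow_add, show s + s = 2 * s by ring, pow_mul, hqn, one_pow]
    have hsig : SigmaCocycle 2 s q 1 1 = q ^ s := by
      simp only [SigmaCocycle, PhiCocycle, h11, hneg, val1, ZMod.val_zero]
      norm_num
      rw [val1, mul_one, hss, div_one]
    rw [pow_two, h, hsig]
  -- now n ≥ 3
  · have hn3 : 3 ≤ n := h3
    have hval2 : ((1 : ZMod n) + 1).val = 2 := by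
      rw [show (1 : ZMod n) + 1 = ((2 : ℕ) : ZMod n) by push_cast; ring,
        ZMod.val_cast_of_lt (by omega)]
    have hnegone : (-1 : ZMod n).val = n - 1 := by
      rw [ZMod.neg_val, if_neg one_ne_zero, val1]
    -- the key formula for σ(k, 1), 1 ≤ k < n
    have hsig : ∀ k : ℕ, 1 ≤ k → k < n →
        SigmaCocycle n s q (k : ZMod n) 1
          = q ^ (s * ((k + 1) % n)) * (q ^ (s * ((k + 2) % n)))⁻¹ := by
      intro k hk1 hkn
      have hvk : ((k : ZMod n)).val = k := ZMod.val_cast_of_lt hkn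
      have hvk1 : ((k : ZMod n) + 1).val = (k + 1) % n := by
        rw [show (k : ZMod n) + 1 = ((k + 1 : ℕ) : ZMod n) by push_cast; ring,
          ZMod.val_natCast]
      have hvk2 : ((k : ZMod n) + 1 + 1).val = (k + 2) % n := by
        rw [show (k : ZMod n) + 1 + 1 = ((k + 2 : ℕ) : ZMod n) by push_cast; ring,
          ZMod.val_natCast]
      have hk0 : (k : ZMod n) ≠ 0 := by
        intro h0
        rw [ZMod.natCast_eq_zero_iff] at h0
        exact absurd (Nat.le_of_dvd (by omega) h0) (by omega)
      have hvnegk : (-(k : ZMod n)).val = n - k := by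
        rw [ZMod.neg_val, if_neg hk0, hvk]
      -- carry computations
      have c11 : (1 + 1 - (1 + 1) % n) / n = 0 := by
        rw [Nat.mod_eq_of_lt (by omega)]; simp
      have cneg : ((n - 1) + (n - k) - ((n - 1) + (n - k)) % n) / n = 1 := by
        rw [show (n - 1) + (n - k) = n + (n - 1 - k) by omega, Nat.add_mod_left,
          Nat.mod_eq_of_lt (by omega)]
        rw [show n + (n - 1 - k) - (n - 1 - k) = n by omega, Nat.div_self (by omega)]
      have c2 : (2 + (n - 1) - (2 + (n - 1)) % n) / n = 1 := by
        rw [show 2 + (n - 1) = n + 1 by omega, Nat.add_mod_left,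
          Nat.mod_eq_of_lt (by omega)]
        rw [show n + 1 - 1 = n by omega, Nat.div_self (by omega)]
      have c1n : (1 + (n - 1) - (1 + (n - 1)) % n) / n = 1 := by
        rw [show 1 + (n - 1) = n by omega, Nat.mod_self, Nat.sub_zero,
          Nat.div_self (by omega)]
      simp only [SigmaCocycle, PhiCocycle, hvk, hvk1, hvk2, hvnegk, hnegone, val1,
        hval2, c11, cneg, c2, c1n, mul_one, mul_zero, pow_zero, one_mul]
      field_simp
    -- σ(0,1) = 1
    have hsig0 : SigmaCocycle n s q ((0 : ℕ) : ZMod n) 1 = 1 := by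
      have c0 : ((n - 1) + 0 - ((n - 1) + 0) % n) / n = 0 := by
        rw [Nat.add_zero, Nat.mod_eq_of_lt (by omega)]; simp
      simp only [SigmaCocycle, PhiCocycle, Nat.cast_zero, neg_zero, zero_add,
        ZMod.val_zero, hnegone, hval2, val1, c0]
      simp
    -- ρ(1)^m via induction
    have hpow : ∀ m : ℕ, ρ 1 ^ m
        = (∏ j ∈ Finset.range m, SigmaCocycle n s q (j : ZMod n) 1) * ρ ((m : ℕ) : ZMod n) := by
      intro m
      induction m with
      | zero => simp [hρ0]
      | succ m ih =>
        rw [pow_succ, ih, Finset.prod_range_succ]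
        have h := hmul ((m : ℕ) : ZMod n) 1
        rw [show ((m : ℕ) : ZMod n) + 1 = ((m + 1 : ℕ) : ZMod n) by push_cast; ring] at h
        rw [mul_assoc, h]
        ring
    -- telescoping product
    have hprod : ∀ m : ℕ, 1 ≤ m → m ≤ n →
        (∏ j ∈ Finset.range m, SigmaCocycle n s q (j : ZMod n) 1) * q ^ (s * ((m + 1) % n))
          = q ^ (s * 2) := by
      intro m hm1
      induction m with
      | zero => omega
      | succ m ih =>
        intro hmn
        rcases Nat.eq_or_lt_of_le hm1 with h1 | h1
        · rw [← h1]
          rw [Finset.prod_range_one, hsig0, one_mul, Nat.mod_eq_of_lt (by omega)]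
        · have hm : 1 ≤ m := by omega
          rw [Finset.prod_range_succ, hsig m hm (by omega),
            show m + 1 + 1 = m + 2 by omega]
          have hne : q ^ (s * ((m + 2) % n)) ≠ 0 := pow_ne_zero _ hq0
          have := ih hm (by omega)
          calc (∏ j ∈ Finset.range m, SigmaCocycle n s q (j : ZMod n) 1) *
                (q ^ (s * ((m + 1) % n)) * (q ^ (s * ((m + 2) % n)))⁻¹) * q ^ (s * ((m + 2) % n))
              = (∏ j ∈ Finset.range m, SigmaCocycle n s q (j : ZMod n) 1) *
                q ^ (s * ((m + 1) % n)) * ((q ^ (s * ((m + 2) % n)))⁻¹ * q ^ (s * ((m + 2) % n))) := by ring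
            _ = q ^ (s * 2) := by rw [inv_mul_cancel₀ hne, mul_one, this]
    have hfin := hprod n (by omega) le_rfl
    rw [show (n + 1) % n = 1 by
      rw [Nat.add_mod_left]; exact Nat.mod_eq_of_lt (by omega)] at hfin
    rw [hpow n, ZMod.natCast_self, hρ0, mul_one]
    have : q ^ (s * 2) = q ^ s * q ^ (s * 1) := by
      rw [← pow_add]; ring_nf
    rw [this] at hfin
    exact mul_right_cancel₀ (pow_ne_zero _ hq0) hfin
end

section
/- The map ρ ↦ ρ(g) is a bijection from the set of functions ρ : ℤ_n → ℂ∖{0} satisfying ρ(x)·ρ(y) = σ_s(x,y)·ρ(xy) for all x, y ∈ ℤ_n, onto the set {λ ∈ ℂ : λ^n = 𝕢^s}. In particular there are exactly n such functions ρ, and σ_s is a 2-coboundary on ℤ_n (i.e., there exists ρ : ℤ_n → ℂ∖{0} with σ_s(x,y) = ρ(x)·ρ(y)·ρ(xy)^{-1} for all x, y). -/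
private lemma pow_mod_eq {q : ℂ} {n : ℕ} (hqn : q ^ n = 1) (a : ℕ) :
    q ^ a = q ^ (a % n) := by
  conv_lhs => rw [← Nat.div_add_mod a n]
  rw [pow_add, pow_mul, hqn, one_pow, one_mul]

private lemma pow_congr_mod {q : ℂ} {n : ℕ} (hqn : q ^ n = 1) {a b : ℕ}
    (h : a % n = b % n) : q ^ a = q ^ b := by
  rw [pow_mod_eq hqn a, pow_mod_eq hqn b, h]

private lemma combine {q : ℂ} (hq0 : q ≠ 0) {n : ℕ} (hqn : q ^ n = 1)
    {a b c d e f : ℕ} (h : (a + b + c) % n = (f + (d + e)) % n) :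
    q ^ a * q ^ b * q ^ c / (q ^ d * q ^ e) = q ^ f := by
  rw [div_eq_iff (mul_ne_zero (pow_ne_zero _ hq0) (pow_ne_zero _ hq0)),
    ← pow_add, ← pow_add, ← pow_add, ← pow_add]
  exact pow_congr_mod hqn h

private lemma mod_eq_of_eq_add {x y n s : ℕ} (h : y = x + s * n) : x % n = y % n := by
  subst h; rw [Nat.add_mul_mod_self_right]

private lemma mul_pred_add {s a : ℕ} (h : 1 ≤ a) : s * (a - 1) + s * 1 = s * a := by
  rw [← Nat.mul_add]; congr 1; omega

private lemma sigma_val (n s : ℕ) (hn : 2 ≤ n) (q : ℂ) (hqn : q ^ n = 1) (x y : ZMod n) :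
    SigmaCocycle n s q x y =
      if 1 ≤ x.val ∧ 1 ≤ y.val ∧ x.val + y.val ≤ n then q ^ (s * (n - 1)) else 1 := by
  haveI : NeZero n := ⟨by omega⟩
  haveI : Fact (1 < n) := ⟨by omega⟩
  have hn0 : 0 < n := by omega
  have hq0 : q ≠ 0 := by
    intro h; rw [h, zero_pow (by omega : n ≠ 0)] at hqn; exact one_ne_zero hqn.symm
  have hsub : ∀ a : ℕ, (a - a % n) / n = a / n := by
    intro a
    have h1 : a - a % n = n * (a / n) := by
      have := Nat.div_add_mod a n; omega
    rw [h1, Nat.mul_div_cancel_left _ hn0]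
  simp only [SigmaCocycle, PhiCocycle, ZMod.val_add, ZMod.neg_val', ZMod.val_one, hsub]
  have hi' : x.val < n := x.val_lt
  have hj' : y.val < n := y.val_lt
  generalize x.val = i at hi' ⊢
  generalize y.val = j at hj' ⊢
  rcases Nat.eq_zero_or_pos i with rfl | hi1
  · -- i = 0
    have h0 : (n - 0) % n = 0 := by simp
    have hA0 : ((n - j) % n + (n - 0) % n) / n = 0 := by
      rw [h0, Nat.add_zero]; exact Nat.div_eq_of_lt (Nat.mod_lt _ hn0)
    rw [if_neg (by omega)]
    simp [hA0]
  rcases Nat.eq_zero_or_pos j with rfl | hj1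
  · -- j = 0
    have h0 : (n - 0) % n = 0 := by simp
    have h1 : (0 + 1) / n = 0 := Nat.div_eq_of_lt (by omega)
    have h2 : ((n - 0) % n + (n - i) % n) / n = 0 := by
      rw [h0, Nat.zero_add]; exact Nat.div_eq_of_lt (Nat.mod_lt _ hn0)
    have h3 : (0 + 1) % n = 1 := Nat.mod_eq_of_lt (by omega)
    have h4 : (1 + (n - 0) % n) / n = 0 := by rw [h0]; exact Nat.div_eq_of_lt (by omega)
    have h5 : (0 + (n - 0) % n) / n = 0 := by rw [h0]; exact Nat.div_eq_of_lt (by omega)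
    rw [if_neg (by omega)]
    simp [h0, h1, h2, h3, h4, h5]
  · -- i ≥ 1, j ≥ 1
    have hnj : (n - j) % n = n - j := Nat.mod_eq_of_lt (by omega)
    have hni : (n - i) % n = n - i := Nat.mod_eq_of_lt (by omega)
    have hE5 : (j + (n - j) % n) / n = 1 := by
      rw [hnj, show j + (n - j) = n by omega]; exact Nat.div_self hn0
    by_cases hjn : j = n - 1
    · -- j = n - 1
      have hj2 : j + 1 = n := by omega
      have hd1 : (j + 1) / n = 1 := by rw [hj2]; exact Nat.div_self hn0
      have hm1 : (j + 1) % n = 0 := by rw [hj2]; exact Nat.mod_self n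
      have hd3 : (0 + (n - j) % n) / n = 0 := by
        rw [hnj, Nat.zero_add]; exact Nat.div_eq_of_lt (by omega)
      by_cases hi2 : i = 1
      · -- i = 1
        subst hi2
        have hm2 : (1 + j) % n = 0 := by rw [show 1 + j = n by omega]; exact Nat.mod_self n
        have hA : ((n - j) % n + (n - 1) % n) / n = 1 := by
          rw [hnj, Nat.mod_eq_of_lt (by omega), show n - j + (n - 1) = n by omega]
          exact Nat.div_self hn0
        have hm4 : (0 + 1) % n = 1 := Nat.mod_eq_of_lt (by omega)
        rw [if_pos (by omega)]
        simp only [hd1, hm1, hd3, hm2, hA, hE5, hm4, Nat.mul_one, Nat.mul_zero,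
          Nat.zero_mul, Nat.mul_succ]
        apply combine hq0 hqn
        have e1 : s * (n - 1) + s * 1 = s * n := mul_pred_add (by omega)
        exact mod_eq_of_eq_add (s := s) (by omega)
      · -- i ≥ 2
        have hA : ((n - j) % n + (n - i) % n) / n = 0 := by
          rw [hnj, hni]; exact Nat.div_eq_of_lt (by omega)
        have hm2 : (i + j) % n = i - 1 := by
          rw [Nat.mod_eq_sub_mod (by omega : n ≤ i + j), show i + j - n = i - 1 by omega]
          exact Nat.mod_eq_of_lt (by omega)
        have hm4 : (i - 1 + 1) % n = i := by
          rw [show i - 1 + 1 = i by omega]; exact Nat.mod_eq_of_lt hi'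
        rw [if_neg (by omega)]
        simp only [hd1, hm1, hd3, hm2, hA, hE5, hm4, Nat.mul_one, Nat.mul_zero, Nat.zero_mul]
        rw [show (1 : ℂ) = q ^ 0 from (pow_zero q).symm]
        apply combine hq0 hqn
        exact mod_eq_of_eq_add (s := 0) (by omega)
    · -- j ≤ n - 2
      have hjlt : j + 1 < n := by omega
      have hd1 : (j + 1) / n = 0 := Nat.div_eq_of_lt hjlt
      have hm1 : (j + 1) % n = j + 1 := Nat.mod_eq_of_lt hjlt
      have hd3 : (j + 1 + (n - j) % n) / n = 1 := by
        rw [hnj, show j + 1 + (n - j) = n + 1 by omega]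
        exact Nat.div_eq_of_lt_le (by omega) (by omega)
      rcases lt_trichotomy (i + j) n with hlt | heq | hgt
      · -- i + j < n
        have hm2 : (i + j) % n = i + j := Nat.mod_eq_of_lt hlt
        have hA : ((n - j) % n + (n - i) % n) / n = 1 := by
          rw [hnj, hni]; exact Nat.div_eq_of_lt_le (by omega) (by omega)
        by_cases h9 : i + j + 1 = n
        · have hm4 : (i + j + 1) % n = 0 := by rw [h9]; exact Nat.mod_self n
          rw [if_pos (by omega)]
          simp only [hd1, hm1, hd3, hm2, hA, hE5, hm4, Nat.mul_one, Nat.mul_zero, Nat.zero_mul]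
          apply combine hq0 hqn
          have e1 : s * (i + j) = s * (n - 1) := by rw [show i + j = n - 1 by omega]
          exact mod_eq_of_eq_add (s := 0) (by omega)
        · have hm4 : (i + j + 1) % n = i + j + 1 := Nat.mod_eq_of_lt (by omega)
          rw [if_pos (by omega)]
          simp only [hd1, hm1, hd3, hm2, hA, hE5, hm4, Nat.mul_one, Nat.mul_zero, Nat.zero_mul]
          apply combine hq0 hqn
          have e1 : s * (i + j) + s * 1 = s * (i + j + 1) := by rw [← Nat.mul_add]
          have e2 : s * (n - 1) + s * 1 = s * n := mul_pred_add (by omega)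
          exact mod_eq_of_eq_add (s := s) (by omega)
      · -- i + j = n
        have hm2 : (i + j) % n = 0 := by rw [heq]; exact Nat.mod_self n
        have hA : ((n - j) % n + (n - i) % n) / n = 1 := by
          rw [hnj, hni]; exact Nat.div_eq_of_lt_le (by omega) (by omega)
        have hm4 : (0 + 1) % n = 1 := Nat.mod_eq_of_lt (by omega)
        rw [if_pos (by omega)]
        simp only [hd1, hm1, hd3, hm2, hA, hE5, hm4, Nat.mul_one, Nat.mul_zero, Nat.zero_mul]
        apply combine hq0 hqn
        have e2 : s * (n - 1) + s * 1 = s * n := mul_pred_add (by omega)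
        exact mod_eq_of_eq_add (s := s) (by omega)
      · -- i + j > n
        have hm2 : (i + j) % n = i + j - n := by
          rw [Nat.mod_eq_sub_mod (by omega : n ≤ i + j)]
          exact Nat.mod_eq_of_lt (by omega)
        have hA : ((n - j) % n + (n - i) % n) / n = 0 := by
          rw [hnj, hni]; exact Nat.div_eq_of_lt (by omega)
        have hm4 : (i + j - n + 1) % n = i + j - n + 1 := Nat.mod_eq_of_lt (by omega)
        rw [if_neg (by omega)]
        simp only [hd1, hm1, hd3, hm2, hA, hE5, hm4, Nat.mul_one, Nat.mul_zero, Nat.zero_mul]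
        rw [show (1 : ℂ) = q ^ 0 from (pow_zero q).symm]
        apply combine hq0 hqn
        exact mod_eq_of_eq_add (s := 0) (by omega)

/-- The map `ρ ↦ ρ(g)` is a bijection from the set of one-dimensional projective
`σ_s`-representations `ρ : ℤ_n → ℂ∖{0}` onto `{λ ∈ ℂ : λ^n = 𝕢^s}`; in particular
there are exactly `n` such `ρ`, and `σ_s` is a 2-coboundary on `ℤ_n`. -/
theorem one_dim_projective_reps_bijection
    (n : ℕ) (hn : 2 ≤ n) (q : ℂ) (hq : IsPrimitiveRoot q n)
    (s : ℕ) (hs : s ≤ n - 1) :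
    Set.BijOn (fun ρ : ZMod n → ℂ => ρ 1)
      {ρ | (∀ x, ρ x ≠ 0) ∧
        ∀ x y : ZMod n, ρ x * ρ y = SigmaCocycle n s q x y * ρ (x + y)}
      {l : ℂ | l ^ n = q ^ s} ∧
    {ρ : ZMod n → ℂ | (∀ x, ρ x ≠ 0) ∧
        ∀ x y : ZMod n, ρ x * ρ y = SigmaCocycle n s q x y * ρ (x + y)}.ncard = n ∧
    ∃ ρ : ZMod n → ℂ, (∀ x, ρ x ≠ 0) ∧
      ∀ x y : ZMod n, SigmaCocycle n s q x y = ρ x * ρ y * (ρ (x + y))⁻¹ := by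
  haveI : NeZero n := ⟨by omega⟩
  haveI : Fact (1 < n) := ⟨by omega⟩
  have hn0 : 0 < n := by omega
  have hqn : q ^ n = 1 := hq.pow_eq_one
  have hq0 : q ≠ 0 := by
    intro h; rw [h, zero_pow (by omega : n ≠ 0)] at hqn; exact one_ne_zero hqn.symm
  have hqs0 : q ^ s ≠ 0 := pow_ne_zero _ hq0
  have hσ := sigma_val n s hn q hqn
  -- the canonical family of solutions
  have hFmem : ∀ l : ℂ, l ^ n = q ^ s →
      (∀ x : ZMod n, (l ^ x.val * q ^ (s * (x.val - 1))) ≠ 0) ∧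
      ∀ x y : ZMod n, (l ^ x.val * q ^ (s * (x.val - 1))) * (l ^ y.val * q ^ (s * (y.val - 1)))
        = SigmaCocycle n s q x y * (l ^ (x + y).val * q ^ (s * ((x + y).val - 1))) := by
    intro l hl
    have hl0 : l ≠ 0 := by
      intro h; rw [h, zero_pow (by omega : n ≠ 0)] at hl; exact hqs0 hl.symm
    refine ⟨fun x => mul_ne_zero (pow_ne_zero _ hl0) (pow_ne_zero _ hq0), fun x y => ?_⟩
    rw [hσ, ZMod.val_add]
    have hi' : x.val < n := x.val_lt
    have hj' : y.val < n := y.val_lt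
    generalize x.val = i at hi' ⊢
    generalize y.val = j at hj' ⊢
    rcases Nat.eq_zero_or_pos i with rfl | hi1
    · have hm : (0 + j) % n = j := by rw [Nat.zero_add]; exact Nat.mod_eq_of_lt hj'
      rw [hm, if_neg (by omega)]
      simp
    rcases Nat.eq_zero_or_pos j with rfl | hj1
    · have hm : (i + 0) % n = i := by rw [Nat.add_zero]; exact Nat.mod_eq_of_lt hi'
      rw [hm, if_neg (by omega)]
      simp
    rcases lt_trichotomy (i + j) n with hlt | heq | hgt
    · rw [Nat.mod_eq_of_lt hlt, if_pos (by omega), mul_mul_mul_comm, ← pow_add, ← pow_add,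
        mul_left_comm, ← pow_add]
      congr 1
      refine pow_congr_mod hqn ?_
      have e1 : s * (i - 1) + s * 1 = s * i := mul_pred_add hi1
      have e2 : s * (j - 1) + s * 1 = s * j := mul_pred_add hj1
      have e3 : s * (i + j - 1) + s * 1 = s * (i + j) := mul_pred_add (by omega)
      have e4 : s * (n - 1) + s * 1 = s * n := mul_pred_add (by omega)
      have e5 : s * (i + j) = s * i + s * j := Nat.mul_add s i j
      exact mod_eq_of_eq_add (s := s) (by omega)
    · have hm2 : (i + j) % n = 0 := by rw [heq]; exact Nat.mod_self n
      rw [hm2, if_pos (by omega), mul_mul_mul_comm, ← pow_add, ← pow_add, heq, hl, ← pow_add]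
      simp only [pow_zero, Nat.zero_sub, Nat.mul_zero, one_mul, mul_one]
      refine pow_congr_mod hqn ?_
      have e1 : s * (i - 1) + s * 1 = s * i := mul_pred_add hi1
      have e2 : s * (j - 1) + s * 1 = s * j := mul_pred_add hj1
      have e4 : s * (n - 1) + s * 1 = s * n := mul_pred_add (by omega)
      have e5 : s * (i + j) = s * i + s * j := Nat.mul_add s i j
      have e6 : s * (i + j) = s * n := by rw [heq]
      exact mod_eq_of_eq_add (s := 0) (by omega)
    · have hm2 : (i + j) % n = i + j - n := by
        rw [Nat.mod_eq_sub_mod (by omega : n ≤ i + j)]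
        exact Nat.mod_eq_of_lt (by omega)
      have hll : l ^ (i + j) = l ^ (i + j - n) * q ^ s := by
        rw [← hl, ← pow_add]; congr 1; omega
      rw [hm2, if_neg (by omega), one_mul, mul_mul_mul_comm, ← pow_add, ← pow_add, hll,
        mul_assoc, ← pow_add]
      congr 1
      refine pow_congr_mod hqn ?_
      have e1 : s * (i - 1) + s * 1 = s * i := mul_pred_add hi1
      have e2 : s * (j - 1) + s * 1 = s * j := mul_pred_add hj1
      have e5 : s * (i + j) = s * i + s * j := Nat.mul_add s i j
      have e7 : s * (i + j - n - 1) + s * 1 = s * (i + j - n) := mul_pred_add (by omega)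
      have e8 : s * (i + j - n) + s * n = s * (i + j) := by rw [← Nat.mul_add]; congr 1; omega
      exact (mod_eq_of_eq_add (s := s) (by omega)).symm
  -- every solution is of this form
  have hρval : ∀ ρ : ZMod n → ℂ, (∀ x, ρ x ≠ 0) →
      (∀ x y : ZMod n, ρ x * ρ y = SigmaCocycle n s q x y * ρ (x + y)) →
      (∀ x : ZMod n, ρ x = (ρ 1) ^ x.val * q ^ (s * (x.val - 1))) ∧ (ρ 1) ^ n = q ^ s := by
    intro ρ hne hco
    have h0 : ρ 0 = 1 := by
      have h := hco 0 0
      rw [hσ, if_neg (by simp [ZMod.val_zero])] at h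
      rw [one_mul, add_zero] at h
      exact mul_left_cancel₀ (hne 0) (by rw [h, mul_one])
    have hval : ∀ m : ℕ, m < n → ρ (m : ZMod n) = (ρ 1) ^ m * q ^ (s * (m - 1)) := by
      intro m
      induction m with
      | zero => intro _; simpa using h0
      | succ m ih =>
        intro hm
        have hm' : m < n := by omega
        rcases Nat.eq_zero_or_pos m with rfl | hm1
        · simp
        · have hc := hco (m : ZMod n) 1
          rw [hσ, ZMod.val_cast_of_lt hm', ZMod.val_one, if_pos ⟨hm1, le_refl 1, by omega⟩] at hc
          have hcast : ((m : ZMod n) + 1) = ((m + 1 : ℕ) : ZMod n) := by push_cast; ring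
          rw [hcast, ih hm'] at hc
          apply mul_left_cancel₀ (pow_ne_zero (s * (n - 1)) hq0)
          rw [← hc, mul_right_comm, ← pow_succ, mul_left_comm, ← pow_add]
          congr 1
          refine pow_congr_mod hqn ?_
          have e1 : s * (m - 1) + s * 1 = s * m := mul_pred_add hm1
          have e2 : s * (n - 1) + s * 1 = s * n := mul_pred_add (by omega)
          have e3 : s * (m + 1 - 1) = s * m := by rw [Nat.add_sub_cancel]
          exact mod_eq_of_eq_add (s := s) (by omega)
    have hln : (ρ 1) ^ n = q ^ s := by
      have hc := hco ((n - 1 : ℕ) : ZMod n) 1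
      rw [hσ, ZMod.val_cast_of_lt (by omega), ZMod.val_one,
        if_pos ⟨by omega, le_refl 1, by omega⟩] at hc
      have hcast : (((n - 1 : ℕ) : ZMod n) + 1) = 0 := by
        have h1 : (((n - 1 : ℕ) : ZMod n) + 1) = ((n - 1 + 1 : ℕ) : ZMod n) := by push_cast; ring
        rw [h1, show n - 1 + 1 = n by omega, ZMod.natCast_self]
      rw [hcast, h0, mul_one, hval (n - 1) (by omega)] at hc
      rw [mul_right_comm, ← pow_succ, show n - 1 + 1 = n by omega] at hc
      have h2 : (q : ℂ) ^ (s * (n - 1)) = q ^ s * q ^ (s * (n - 1 - 1)) := by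
        rw [← pow_add]; congr 1
        have e : s * (n - 1 - 1) + s * 1 = s * (n - 1) := mul_pred_add (a := n - 1) (by omega)
        omega
      rw [h2] at hc
      exact mul_right_cancel₀ (pow_ne_zero _ hq0) hc
    refine ⟨fun x => ?_, hln⟩
    have h3 := hval x.val x.val_lt
    rwa [ZMod.natCast_rightInverse x] at h3
  have hbij : Set.BijOn (fun ρ : ZMod n → ℂ => ρ 1)
      {ρ | (∀ x, ρ x ≠ 0) ∧
        ∀ x y : ZMod n, ρ x * ρ y = SigmaCocycle n s q x y * ρ (x + y)}
      {l : ℂ | l ^ n = q ^ s} := by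
    refine ⟨fun ρ hρ => (hρval ρ hρ.1 hρ.2).2, fun ρa hρa ρb hρb hee => ?_, fun l hl => ?_⟩
    · funext x
      rw [(hρval ρa hρa.1 hρa.2).1 x, (hρval ρb hρb.1 hρb.2).1 x]
      simp only at hee
      rw [hee]
    · exact ⟨fun x => l ^ x.val * q ^ (s * (x.val - 1)), hFmem l hl, by simp [ZMod.val_one]⟩
  obtain ⟨l0, hl0⟩ := IsAlgClosed.exists_pow_nat_eq (q ^ s) hn0
  have hl00 : l0 ≠ 0 := by
    intro h; rw [h, zero_pow (by omega : n ≠ 0)] at hl0; exact hqs0 hl0.symm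
  refine ⟨hbij, ?_, ?_⟩
  · have h2 := Set.ncard_image_of_injOn hbij.injOn
    rw [hbij.image_eq] at h2
    rw [← h2]
    have hT : {l : ℂ | l ^ n = q ^ s} =
        (fun z => z * l0) '' ((Polynomial.nthRootsFinset n (1 : ℂ) : Finset ℂ) : Set ℂ) := by
      ext w
      simp only [Set.mem_image, Finset.mem_coe, Polynomial.mem_nthRootsFinset hn0 (1 : ℂ),
        Set.mem_setOf_eq]
      constructor
      · intro hw
        exact ⟨w / l0, by rw [div_pow, hw, hl0, div_self hqs0], div_mul_cancel₀ w hl00⟩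
      · rintro ⟨z, hz, rfl⟩
        rw [mul_pow, hz, one_mul, hl0]
    rw [hT, Set.ncard_image_of_injective _ (mul_left_injective₀ hl00),
      Set.ncard_coe_finset, hq.card_nthRootsFinset]
  · obtain ⟨hne, hco⟩ := hFmem l0 hl0
    refine ⟨_, hne, fun x y => ?_⟩
    rw [eq_mul_inv_iff_mul_eq₀ (hne (x + y))]
    exact (hco x y).symm
end
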